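/- Let (Ω, ℬ) be a measurable space equipped with two probability measures ℓ and ν, and let (Y^{(m)}_n)_{m≥1, n≥1} be a doubly indexed family of measurable sets. Suppose there exist a natural number N, a positive integer j, and real constants a > 1 and 0 < r < 1 such that for all m ≥ 1 and all n > N one has 1/(a·n^j) < ℓ(Y^{(m)}_n) < a/n^j and ν(Y^{(m)}_n) < r^n; and suppose further that the sets are pairwise almost independent for ℓ: there exists a constant c > 1 such that for all m₁ ≠ m₂ and all n₁, n₂ ≥ 1, ℓ(Y^{(m₁)}_{n₁} ∩ Y^{(m₂)}_{n₂}) < c·ℓ(Y^{(m₁)}_{n₁})·ℓ(Y^{(m₂)}_{n₂}). Then there exists a measurable set X ∈ ℬ such that ℓ(X) > 0 and ν(X) = 0. -/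

import Mathlib

open MeasureTheory Filter
open scoped ENNReal NNReal

lemma bonferroni {Ω ι : Type*} [MeasurableSpace Ω] (μ : Measure Ω) (A : ι → Set Ω)
    (hA : ∀ i, MeasurableSet (A i)) [DecidableEq ι] (s : Finset ι) :
    ∑ i ∈ s, μ (A i) ≤ μ (⋃ i ∈ s, A i) +
      ∑ i ∈ s, ∑ k ∈ s.erase i, μ (A i ∩ A k) := by
  induction s using Finset.induction_on with
  | empty => simp
  | insert x s hx ih =>
    rw [Finset.sum_insert hx]
    have hU : (⋃ i ∈ insert x s, A i) = A x ∪ ⋃ i ∈ s, A i := by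
      simp [Set.biUnion_insert]
    have hkey : μ (A x) + μ (⋃ i ∈ s, A i)
        = μ (A x ∪ ⋃ i ∈ s, A i) + μ (A x ∩ ⋃ i ∈ s, A i) := by
      exact (measure_union_add_inter _ (MeasurableSet.biUnion s.countable_toSet
        (fun i _ => hA i))).symm
    have hcap : μ (A x ∩ ⋃ i ∈ s, A i) ≤ ∑ i ∈ s, μ (A x ∩ A i) := by
      rw [Set.inter_iUnion₂]
      exact measure_biUnion_finset_le s _
    have hpair : ∑ i ∈ s, μ (A x ∩ A i) + ∑ i ∈ s, ∑ k ∈ s.erase i, μ (A i ∩ A k)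
        ≤ ∑ i ∈ insert x s, ∑ k ∈ (insert x s).erase i, μ (A i ∩ A k) := by
      rw [Finset.sum_insert hx, Finset.erase_insert hx]
      refine add_le_add_right (Finset.sum_le_sum fun i hi => ?_) _
      have hix : i ≠ x := fun h => hx (h ▸ hi)
      rw [Finset.erase_insert_of_ne hix.symm, Finset.sum_insert
        (fun h => hx (Finset.erase_subset _ _ h))]
      exact le_add_self
    calc μ (A x) + ∑ i ∈ s, μ (A i)
        ≤ μ (A x) + (μ (⋃ i ∈ s, A i) + ∑ i ∈ s, ∑ k ∈ s.erase i, μ (A i ∩ A k)) := by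
          gcongr
      _ = (μ (A x) + μ (⋃ i ∈ s, A i)) + ∑ i ∈ s, ∑ k ∈ s.erase i, μ (A i ∩ A k) := by ring
      _ = (μ (A x ∪ ⋃ i ∈ s, A i) + μ (A x ∩ ⋃ i ∈ s, A i))
            + ∑ i ∈ s, ∑ k ∈ s.erase i, μ (A i ∩ A k) := by rw [hkey]
      _ ≤ μ (A x ∪ ⋃ i ∈ s, A i) + (∑ i ∈ s, μ (A x ∩ A i)
            + ∑ i ∈ s, ∑ k ∈ s.erase i, μ (A i ∩ A k)) := by
          rw [add_assoc]; gcongr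
      _ ≤ μ (⋃ i ∈ insert x s, A i)
            + ∑ i ∈ insert x s, ∑ k ∈ (insert x s).erase i, μ (A i ∩ A k) := by
          rw [hU]; gcongr

set_option maxHeartbeats 1000000 in
/-- Doubly indexed Borel–Cantelli setup: polynomial lower/upper bounds for `ℓ`,
exponential decay for `ν`, and pairwise almost independence for `ℓ`, produce a
measurable set of positive `ℓ`-measure and zero `ν`-measure. -/
theorem singular_set_from_doubly_indexed_sequence {Ω : Type*} [MeasurableSpace Ω]
    (ℓ ν : Measure Ω) [IsProbabilityMeasure ℓ] [IsProbabilityMeasure ν]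
    (Y : ℕ → ℕ → Set Ω) (hmeas : ∀ m n, MeasurableSet (Y m n))
    (N : ℕ) (j : ℕ) (hj : 1 ≤ j) (a : ℝ) (ha : 1 < a) (r : ℝ) (hr0 : 0 < r) (hr1 : r < 1)
    (hℓ : ∀ m n : ℕ, 1 ≤ m → N < n →
      ENNReal.ofReal (1 / (a * (n : ℝ) ^ j)) < ℓ (Y m n) ∧
      ℓ (Y m n) < ENNReal.ofReal (a / (n : ℝ) ^ j))
    (hν : ∀ m n : ℕ, 1 ≤ m → N < n → ν (Y m n) < ENNReal.ofReal (r ^ n))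
    (c : ℝ) (hc : 1 < c)
    (hindep : ∀ m₁ m₂ n₁ n₂ : ℕ, m₁ ≠ m₂ → 1 ≤ m₁ → 1 ≤ m₂ → 1 ≤ n₁ → 1 ≤ n₂ →
      ℓ (Y m₁ n₁ ∩ Y m₂ n₂) < ENNReal.ofReal c * ℓ (Y m₁ n₁) * ℓ (Y m₂ n₂)) :
    ∃ X : Set Ω, MeasurableSet X ∧ 0 < ℓ X ∧ ν X = 0 := by
  have ha0 : (0:ℝ) < a := lt_trans one_pos ha
  have hc0 : (0:ℝ) < c := lt_trans one_pos hc
  set δr : ℝ := 1 / (8 * c * a ^ 4) with hδr_def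
  have hδr : 0 < δr := by positivity
  -- threshold
  set N₀ : ℕ := max (N + 1) (max 1 ⌈4 * c * a ^ 3⌉₊) with hN₀_def
  have hN₀ : ∀ n : ℕ, N₀ ≤ n → N < n ∧ 1 ≤ n ∧ 4 * c * a ^ 3 ≤ (n : ℝ) := by
    intro n hn
    have h1 : N + 1 ≤ n := le_trans (le_max_left _ _) hn
    have h2 : ⌈4 * c * a ^ 3⌉₊ ≤ n := le_trans (le_trans (le_max_right _ _) (le_max_right _ _)) hn
    refine ⟨by omega, by omega, ?_⟩
    calc 4 * c * a ^ 3 ≤ (⌈4 * c * a ^ 3⌉₊ : ℝ) := Nat.le_ceil _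
      _ ≤ (n : ℝ) := by exact_mod_cast h2
  -- the sets
  set M : ℕ → ℕ := fun n => ⌊(n : ℝ) ^ j / (2 * c * a ^ 3)⌋₊ with hM_def
  set S : ℕ → Set Ω := fun n => ⋃ m ∈ Finset.Icc 1 (M n), Y m n with hS_def
  have hSmeas : ∀ n, MeasurableSet (S n) := fun n =>
    MeasurableSet.biUnion (Finset.Icc 1 (M n)).countable_toSet (fun m _ => hmeas m n)
  -- basic real facts for n ≥ N₀
  have hfacts : ∀ n : ℕ, N₀ ≤ n →
      2 ≤ (n : ℝ) ^ j / (2 * c * a ^ 3) ∧ (n : ℝ) ^ j / (2 * c * a ^ 3) / 2 ≤ (M n : ℝ) ∧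
      (M n : ℝ) ≤ (n : ℝ) ^ j / (2 * c * a ^ 3) ∧ 1 ≤ M n ∧ 0 < (n : ℝ) ^ j := by
    intro n hn
    obtain ⟨hNn, hn1, h4⟩ := hN₀ n hn
    have hn1' : (1:ℝ) ≤ (n:ℝ) := by exact_mod_cast hn1
    have hp1 : (n : ℝ) ≤ (n : ℝ) ^ j := le_self_pow₀ hn1' (by omega)
    have hp : 0 < (n : ℝ) ^ j := by positivity
    set x : ℝ := (n : ℝ) ^ j / (2 * c * a ^ 3) with hx_def
    have hden : (0:ℝ) < 2 * c * a ^ 3 := by positivity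
    have hx2 : 2 ≤ x := by
      rw [hx_def, le_div_iff₀ hden]
      nlinarith
    have hMx : (M n : ℝ) ≤ x := Nat.floor_le (by positivity)
    have hMlow : x / 2 ≤ (M n : ℝ) := by
      have := Nat.sub_one_lt_floor x
      simp only [hM_def]
      linarith
    have hM1 : 1 ≤ M n := Nat.le_floor (by rw [Nat.cast_one]; linarith)
    exact ⟨hx2, hMlow, hMx, hM1, hp⟩
  -- core lower estimate for ℓ
  have hcore : ∀ n : ℕ, N₀ ≤ n → ENNReal.ofReal δr ≤ ℓ (S n) := by
    intro n hn
    obtain ⟨hNn, hn1, h4⟩ := hN₀ n hn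
    obtain ⟨hx2, hMlow, hMx, hM1, hp⟩ := hfacts n hn
    set p : ℝ := (n : ℝ) ^ j with hp_def
    set s : Finset ℕ := Finset.Icc 1 (M n) with hs_def
    have hcard : s.card = M n := by simp [hs_def]
    -- lower bound on the sum
    have hlow : (s.card : ℝ≥0∞) * ENNReal.ofReal (1 / (a * p)) ≤ ∑ m ∈ s, ℓ (Y m n) := by
      rw [← nsmul_eq_mul]
      refine Finset.card_nsmul_le_sum s _ _ fun m hm => ?_
      exact (hℓ m n (Finset.mem_Icc.mp hm).1 hNn).1.le
    -- upper bound on pair sum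
    have hQ : ∀ i ∈ s, ∀ k ∈ s.erase i, ℓ (Y i n ∩ Y k n)
        ≤ ENNReal.ofReal (c * (a / p) * (a / p)) := by
      intro i hi k hk
      have hki : k ≠ i := Finset.ne_of_mem_erase hk
      have hks : k ∈ s := Finset.mem_of_mem_erase hk
      have h1 := hindep i k n n hki.symm (Finset.mem_Icc.mp hi).1
        (Finset.mem_Icc.mp hks).1 hn1 hn1
      calc ℓ (Y i n ∩ Y k n) ≤ ENNReal.ofReal c * ℓ (Y i n) * ℓ (Y k n) := h1.le
        _ ≤ ENNReal.ofReal c * ENNReal.ofReal (a / p) * ENNReal.ofReal (a / p) := by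
            gcongr
            · exact (hℓ i n (Finset.mem_Icc.mp hi).1 hNn).2.le
            · exact (hℓ k n (Finset.mem_Icc.mp hks).1 hNn).2.le
        _ = ENNReal.ofReal (c * (a / p) * (a / p)) := by
            rw [← ENNReal.ofReal_mul hc0.le, ← ENNReal.ofReal_mul (by positivity)]
    have hpairs : ∑ i ∈ s, ∑ k ∈ s.erase i, ℓ (Y i n ∩ Y k n)
        ≤ (M n : ℝ≥0∞) * ((M n : ℝ≥0∞) * ENNReal.ofReal (c * (a / p) * (a / p))) := by
      calc ∑ i ∈ s, ∑ k ∈ s.erase i, ℓ (Y i n ∩ Y k n)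
          ≤ ∑ i ∈ s, (M n : ℝ≥0∞) * ENNReal.ofReal (c * (a / p) * (a / p)) := by
            refine Finset.sum_le_sum fun i hi => ?_
            calc ∑ k ∈ s.erase i, ℓ (Y i n ∩ Y k n)
                ≤ (s.erase i).card • ENNReal.ofReal (c * (a / p) * (a / p)) :=
                  Finset.sum_le_card_nsmul _ _ _ (hQ i hi)
              _ ≤ (M n : ℝ≥0∞) * ENNReal.ofReal (c * (a / p) * (a / p)) := by
                  rw [nsmul_eq_mul]
                  gcongr
                  exact_mod_cast le_trans (Finset.card_erase_le) hcard.le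
        _ = (M n : ℝ≥0∞) * ((M n : ℝ≥0∞) * ENNReal.ofReal (c * (a / p) * (a / p))) := by
            rw [Finset.sum_const, hcard, nsmul_eq_mul, mul_assoc]
    -- combine with Bonferroni
    have hbonf := bonferroni ℓ (fun m => Y m n) (fun m => hmeas m n) s
    have hmain : ENNReal.ofReal ((M n : ℝ) * (1 / (a * p)))
        ≤ ℓ (S n) + ENNReal.ofReal ((M n : ℝ) * ((M n : ℝ) * (c * (a / p) * (a / p)))) := by
      have h1 : ENNReal.ofReal ((M n : ℝ) * (1 / (a * p)))
          = (s.card : ℝ≥0∞) * ENNReal.ofReal (1 / (a * p)) := by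
        rw [ENNReal.ofReal_mul (by positivity), hcard, ENNReal.ofReal_natCast]
      have h2 : ENNReal.ofReal ((M n : ℝ) * ((M n : ℝ) * (c * (a / p) * (a / p))))
          = (M n : ℝ≥0∞) * ((M n : ℝ≥0∞) * ENNReal.ofReal (c * (a / p) * (a / p))) := by
        rw [ENNReal.ofReal_mul (by positivity), ENNReal.ofReal_mul (by positivity),
          ENNReal.ofReal_natCast]
      rw [h1, h2]
      calc (s.card : ℝ≥0∞) * ENNReal.ofReal (1 / (a * p)) ≤ ∑ m ∈ s, ℓ (Y m n) := hlow
        _ ≤ ℓ (S n) + ∑ i ∈ s, ∑ k ∈ s.erase i, ℓ (Y i n ∩ Y k n) := hbonf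
        _ ≤ ℓ (S n) + (M n : ℝ≥0∞) * ((M n : ℝ≥0∞) * ENNReal.ofReal (c * (a / p) * (a / p))) := by
            gcongr
    -- real arithmetic
    set t : ℝ := (M n : ℝ) / (2 * a * p) with ht_def
    have hMpos : (0:ℝ) < (M n : ℝ) := by exact_mod_cast hM1
    have hb : (M n : ℝ) * ((M n : ℝ) * (c * (a / p) * (a / p))) ≤ t := by
      have hMx' : (M n : ℝ) * (2 * c * a ^ 3) ≤ p := (le_div_iff₀ (by positivity)).mp hMx
      have heq : (M n : ℝ) * ((M n : ℝ) * (c * (a / p) * (a / p)))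
          = (M n : ℝ) * (M n : ℝ) * c * a * a / (p * p) := by field_simp
      rw [heq, ht_def, div_le_div_iff₀ (by positivity) (by positivity)]
      nlinarith [mul_le_mul_of_nonneg_right hMx' (by positivity : (0:ℝ) ≤ (M n : ℝ) * p)]
    have hc₀ : (M n : ℝ) * (1 / (a * p)) = t + t := by
      rw [ht_def]; field_simp; ring
    have hδt : δr ≤ t := by
      have h' : p ≤ (M n : ℝ) * (2 * c * a ^ 3 * 2) := by
        rw [div_div, div_le_iff₀ (by positivity)] at hMlow
        linarith
      rw [hδr_def, ht_def, div_le_div_iff₀ (by positivity) (by positivity)]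
      nlinarith [mul_le_mul_of_nonneg_left h' (by positivity : (0:ℝ) ≤ 2 * a)]
    have hmain2 : ENNReal.ofReal t + ENNReal.ofReal t ≤ ℓ (S n) + ENNReal.ofReal t := by
      calc ENNReal.ofReal t + ENNReal.ofReal t = ENNReal.ofReal (t + t) :=
            (ENNReal.ofReal_add (by positivity) (by positivity)).symm
        _ = ENNReal.ofReal ((M n : ℝ) * (1 / (a * p))) := by rw [hc₀]
        _ ≤ ℓ (S n) + ENNReal.ofReal ((M n : ℝ) * ((M n : ℝ) * (c * (a / p) * (a / p)))) := hmain
        _ ≤ ℓ (S n) + ENNReal.ofReal t := by gcongr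
    have := (ENNReal.add_le_add_iff_right ENNReal.ofReal_ne_top).mp hmain2
    exact le_trans (ENNReal.ofReal_le_ofReal hδt) this
  -- upper estimate for ν
  have hνb : ∀ n : ℕ, N₀ ≤ n → ν (S n) ≤ ENNReal.ofReal ((n : ℝ) ^ j * r ^ n) := by
    intro n hn
    obtain ⟨hNn, hn1, h4⟩ := hN₀ n hn
    obtain ⟨hx2, hMlow, hMx, hM1, hp⟩ := hfacts n hn
    have hMp : (M n : ℝ) ≤ (n : ℝ) ^ j := by
      refine hMx.trans ?_
      refine div_le_self hp.le ?_
      nlinarith [one_le_pow₀ ha.le (n := 3)]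
    calc ν (S n) ≤ ∑ m ∈ Finset.Icc 1 (M n), ν (Y m n) := measure_biUnion_finset_le _ _
      _ ≤ (Finset.Icc 1 (M n)).card • ENNReal.ofReal (r ^ n) :=
          Finset.sum_le_card_nsmul _ _ _ fun m hm =>
            (hν m n (Finset.mem_Icc.mp hm).1 hNn).le
      _ = ENNReal.ofReal ((M n : ℝ) * r ^ n) := by
          rw [nsmul_eq_mul, ENNReal.ofReal_mul (by positivity), ENNReal.ofReal_natCast]
          simp
      _ ≤ ENNReal.ofReal ((n : ℝ) ^ j * r ^ n) :=
          ENNReal.ofReal_le_ofReal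
            (mul_le_mul_of_nonneg_right hMp (pow_nonneg hr0.le n))
  -- the set X
  refine ⟨limsup S atTop, MeasurableSet.measurableSet_limsup hSmeas, ?_, ?_⟩
  · -- positive ℓ measure
    have hXeq : limsup S atTop = ⋂ K, ⋃ n, ⋃ (_ : K ≤ n), S n := by
      rw [limsup_eq_iInf_iSup_of_nat]
      simp only [Set.iInf_eq_iInter, Set.iSup_eq_iUnion]
    set U : ℕ → Set Ω := fun K => ⋃ n, ⋃ (_ : K ≤ n), S n with hU_def
    have hUm : ∀ K, MeasurableSet (U K) := fun K =>
      MeasurableSet.iUnion fun n => MeasurableSet.iUnion fun _ => hSmeas n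
    have hUanti : Antitone U := by
      intro K L hKL
      simp only [hU_def]
      exact Set.iUnion₂_subset fun n hn =>
        Set.subset_iUnion₂ (s := fun n (_ : K ≤ n) => S n) n (le_trans hKL hn)
    have heq : ℓ (⋂ K, U K) = ⨅ K, ℓ (U K) :=
      Directed.measure_iInter (fun K => (hUm K).nullMeasurableSet)
        (hUanti.directed_ge) ⟨0, (measure_lt_top ℓ _).ne⟩
    rw [hXeq, heq]
    refine lt_of_lt_of_le (ENNReal.ofReal_pos.mpr hδr) (le_iInf fun K => ?_)
    calc ENNReal.ofReal δr ≤ ℓ (S (max K N₀)) := hcore _ (le_max_right _ _)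
      _ ≤ ℓ (U K) := by
          refine measure_mono ?_
          rw [hU_def]
          exact Set.subset_iUnion₂ (s := fun n (_ : K ≤ n) => S n) (max K N₀) (le_max_left _ _)
  · -- ν measure zero
    rw [← Filter.limsup_nat_add S N₀]
    refine measure_limsup_atTop_eq_zero ?_
    have hg : Summable (fun n : ℕ => ((n : ℝ) + N₀) ^ j * r ^ (n + N₀)) := by
      have h0 : Summable (fun n : ℕ => (n : ℝ) ^ j * r ^ n) :=
        summable_pow_mul_geometric_of_norm_lt_one j
          (by rw [Real.norm_eq_abs, abs_of_pos hr0]; exact hr1)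
      have := (summable_nat_add_iff N₀).mpr h0
      refine this.congr fun n => ?_
      push_cast
      ring
    have hfin2 : ∑' n, ν (S (n + N₀)) ≠ ⊤ := by
      have hle : ∑' n, ν (S (n + N₀))
          ≤ ∑' n : ℕ, ENNReal.ofReal (((n : ℝ) + N₀) ^ j * r ^ (n + N₀)) := by
        refine ENNReal.tsum_le_tsum fun n => ?_
        have := hνb (n + N₀) (by omega)
        convert this using 2
        push_cast
        ring
      refine ne_top_of_le_ne_top ?_ hle
      rw [← ENNReal.ofReal_tsum_of_nonneg (fun n => by positivity) hg]
      exact ENNReal.ofReal_ne_top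
    exact hfin2
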